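/- Let f(x) = φ(x) − arcsin x for x ∈ [0,1], where φ(x) = (π(2 − √2)/(π − 2√2))·(√(1 + x) − √(1 − x)) / (√2(4 − π)/(π − 2√2) + √(1 + x) + √(1 − x)). Then the function t ↦ f(sin t)/(t³(π/2 − t)) tends, as t → 0⁺, to the limit α = ((4 + √2)π − 12√2)/((24 − 12√2)π²), and moreover α > 0. -/

import Mathlib

open Filter

/-- The upper bound `φ` for `arcsin` obtained by the λ-method of Mitrinović–Vasić. -/
noncomputable def phiBound (x : ℝ) : ℝ :=
  (Real.pi * (2 - Real.sqrt 2) / (Real.pi - 2 * Real.sqrt 2)) *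
      (Real.sqrt (1 + x) - Real.sqrt (1 - x)) /
    (Real.sqrt 2 * (4 - Real.pi) / (Real.pi - 2 * Real.sqrt 2) +
      Real.sqrt (1 + x) + Real.sqrt (1 - x))

open Real Set

noncomputable def Ac : ℝ := Real.pi * (2 - Real.sqrt 2) / (Real.pi - 2 * Real.sqrt 2)
noncomputable def Bc : ℝ := Real.sqrt 2 * (4 - Real.pi) / (Real.pi - 2 * Real.sqrt 2)

lemma sqrt2_sq : (Real.sqrt 2) ^ 2 = 2 := Real.sq_sqrt (by norm_num)
lemma sqrt2_lt : Real.sqrt 2 < 1.41422 := by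
  nlinarith [sqrt2_sq, Real.sqrt_nonneg 2]
lemma sqrt2_gt : (1.41421 : ℝ) < Real.sqrt 2 := by
  nlinarith [sqrt2_sq, Real.sqrt_nonneg 2]
lemma pi_sub_pos : 0 < Real.pi - 2 * Real.sqrt 2 := by
  nlinarith [Real.pi_gt_d6, sqrt2_lt]
lemma Bc_pos : 0 < Bc := by
  apply div_pos (mul_pos (Real.sqrt_pos.mpr (by norm_num)) (by nlinarith [Real.pi_lt_d2])) pi_sub_pos
lemma Ac_eq : Ac = Bc + 2 := by
  unfold Ac Bc
  rw [div_add' _ _ _ (ne_of_gt pi_sub_pos)]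
  congr 1
  ring

noncomputable def Nf (t : ℝ) : ℝ := 2 * Ac * Real.sin (t / 2) - Bc * t - 2 * (t * Real.cos (t / 2))
noncomputable def N1 (t : ℝ) : ℝ := Ac * Real.cos (t / 2) - Bc - 2 * Real.cos (t / 2) + t * Real.sin (t / 2)
noncomputable def N2 (t : ℝ) : ℝ := (2 - Ac / 2) * Real.sin (t / 2) + t / 2 * Real.cos (t / 2)
noncomputable def N3 (t : ℝ) : ℝ := (3 / 2 - Ac / 4) * Real.cos (t / 2) - t / 4 * Real.sin (t / 2)

lemma hsin (x : ℝ) : HasDerivAt (fun t : ℝ => Real.sin (t / 2)) (Real.cos (x / 2) * (1 / 2)) x :=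
  by have h := (Real.hasDerivAt_sin (x / 2)).comp x ((hasDerivAt_id' (x := x)).div_const 2); exact h

lemma hcos (x : ℝ) : HasDerivAt (fun t : ℝ => Real.cos (t / 2)) (-Real.sin (x / 2) * (1 / 2)) x :=
  by have h := (Real.hasDerivAt_cos (x / 2)).comp x ((hasDerivAt_id' (x := x)).div_const 2); exact h

lemma hNf (x : ℝ) : HasDerivAt Nf (N1 x) x := by
  have h := (((hsin x).const_mul (2 * Ac)).sub ((hasDerivAt_id' (x := x)).const_mul Bc)).sub
    (((hasDerivAt_id' (x := x)).mul (hcos x)).const_mul 2)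
  exact h.congr_deriv (by unfold N1; ring)

lemma hN1 (x : ℝ) : HasDerivAt N1 (N2 x) x := by
  have h := ((((hcos x).const_mul Ac).sub (hasDerivAt_const x Bc)).sub
    ((hcos x).const_mul 2)).add ((hasDerivAt_id' (x := x)).mul (hsin x))
  exact h.congr_deriv (by unfold N2; ring)

lemma hN2 (x : ℝ) : HasDerivAt N2 (N3 x) x := by
  have h := ((hsin x).const_mul (2 - Ac / 2)).add
    (((hasDerivAt_id' (x := x)).div_const 2).mul (hcos x))
  exact h.congr_deriv (by unfold N3; ring)

lemma Ac_pos : 0 < Ac := by rw [Ac_eq]; linarith [Bc_pos]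

lemma tendsto_N3 : Tendsto (fun t => N3 t / 6) (nhdsWithin 0 (Set.Ioi 0)) (nhds ((3/2 - Ac/4)/6)) := by
  have hc : ContinuousAt (fun t => N3 t / 6) 0 := by unfold N3; fun_prop
  have h := hc.tendsto.mono_left (nhdsWithin_le_nhds (s := Set.Ioi (0:ℝ)))
  have h0 : N3 0 / 6 = (3/2 - Ac/4)/6 := by simp [N3]
  rwa [h0] at h

lemma tendsto_N2_div : Tendsto (fun t => N2 t / (6 * t)) (nhdsWithin 0 (Set.Ioi 0)) (nhds ((3/2 - Ac/4)/6)) := by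
  apply HasDerivAt.lhopital_zero_right_on_Ioo (b := 1) one_pos (f' := N3) (g' := fun _ => 6)
    (fun x _ => hN2 x)
    (fun x _ => by simpa using (hasDerivAt_id' (x := x)).const_mul 6)
    (fun x _ => by norm_num)
  · have hc : ContinuousAt N2 0 := by unfold N2; fun_prop
    have h := hc.tendsto.mono_left (nhdsWithin_le_nhds (s := Set.Ioi (0:ℝ)))
    have h0 : N2 0 = 0 := by simp [N2]
    rwa [h0] at h
  · have : ContinuousAt (fun t : ℝ => 6 * t) 0 := by fun_prop
    simpa using this.tendsto.mono_left (nhdsWithin_le_nhds (s := Set.Ioi (0:ℝ)))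
  · exact tendsto_N3

lemma tendsto_N1_div : Tendsto (fun t => N1 t / (3 * t ^ 2)) (nhdsWithin 0 (Set.Ioi 0)) (nhds ((3/2 - Ac/4)/6)) := by
  apply HasDerivAt.lhopital_zero_right_on_Ioo (b := 1) one_pos (f' := N2) (g' := fun t => 6 * t)
    (fun x _ => hN1 x)
    (fun x _ => by simpa using ((hasDerivAt_id' (x := x)).pow 2).const_mul 3 |>.congr_deriv (by ring))
    (fun x hx => by have h0x := hx.1; positivity)
  · have hc : ContinuousAt N1 0 := by unfold N1; fun_prop
    have h := hc.tendsto.mono_left (nhdsWithin_le_nhds (s := Set.Ioi (0:ℝ)))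
    have h0 : N1 0 = 0 := by simp [N1]; rw [Ac_eq]; ring
    rwa [h0] at h
  · have : ContinuousAt (fun t : ℝ => 3 * t ^ 2) 0 := by fun_prop
    simpa using this.tendsto.mono_left (nhdsWithin_le_nhds (s := Set.Ioi (0:ℝ)))
  · exact tendsto_N2_div

lemma tendsto_Nf_div : Tendsto (fun t => Nf t / t ^ 3) (nhdsWithin 0 (Set.Ioi 0)) (nhds ((3/2 - Ac/4)/6)) := by
  apply HasDerivAt.lhopital_zero_right_on_Ioo (b := 1) one_pos (f' := N1) (g' := fun t => 3 * t ^ 2)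
    (fun x _ => hNf x)
    (fun x _ => by simpa using hasDerivAt_pow 3 x)
    (fun x hx => by have h0x := hx.1; positivity)
  · have hc : ContinuousAt Nf 0 := by unfold Nf; fun_prop
    have h := hc.tendsto.mono_left (nhdsWithin_le_nhds (s := Set.Ioi (0:ℝ)))
    have h0 : Nf 0 = 0 := by simp [Nf]
    rwa [h0] at h
  · have : ContinuousAt (fun t : ℝ => t ^ 3) 0 := by fun_prop
    simpa using this.tendsto.mono_left (nhdsWithin_le_nhds (s := Set.Ioi (0:ℝ)))
  · exact tendsto_N1_div


lemma cos_half_big {t : ℝ} (ht0 : 0 < t) (ht1 : t < 1) : 1 / 2 < Real.cos (t / 2) := by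
  have h := Real.one_sub_sq_div_two_le_cos (x := t / 2)
  nlinarith

lemma sin_half_small {t : ℝ} (ht0 : 0 < t) (ht1 : t < 1) : Real.sin (t / 2) < 1 / 2 := by
  have h := Real.sin_lt (x := t / 2) (by linarith)
  linarith

lemma sin_half_nonneg {t : ℝ} (ht0 : 0 < t) (ht1 : t < 1) : 0 ≤ Real.sin (t / 2) := by
  apply Real.sin_nonneg_of_nonneg_of_le_pi (by linarith)
  nlinarith [Real.pi_gt_d6]

lemma sqrt_one_add {t : ℝ} (ht0 : 0 < t) (ht1 : t < 1) :
    Real.sqrt (1 + Real.sin t) = Real.cos (t / 2) + Real.sin (t / 2) := by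
  have hs : Real.sin t = 2 * Real.sin (t / 2) * Real.cos (t / 2) := by
    have := Real.sin_two_mul (t / 2); rw [show 2 * (t / 2) = t by ring] at this; exact this
  have h1 : 1 + Real.sin t = (Real.cos (t / 2) + Real.sin (t / 2)) ^ 2 := by
    rw [hs]; linear_combination -Real.sin_sq_add_cos_sq (t / 2)
  rw [h1, Real.sqrt_sq (by linarith [cos_half_big ht0 ht1, sin_half_nonneg ht0 ht1])]

lemma sqrt_one_sub {t : ℝ} (ht0 : 0 < t) (ht1 : t < 1) :
    Real.sqrt (1 - Real.sin t) = Real.cos (t / 2) - Real.sin (t / 2) := by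
  have hs : Real.sin t = 2 * Real.sin (t / 2) * Real.cos (t / 2) := by
    have := Real.sin_two_mul (t / 2); rw [show 2 * (t / 2) = t by ring] at this; exact this
  have h1 : 1 - Real.sin t = (Real.cos (t / 2) - Real.sin (t / 2)) ^ 2 := by
    rw [hs]; linear_combination -Real.sin_sq_add_cos_sq (t / 2)
  rw [h1, Real.sqrt_sq (by linarith [cos_half_big ht0 ht1, sin_half_small ht0 ht1])]

lemma eventual_eq {t : ℝ} (ht0 : 0 < t) (ht1 : t < 1) :
    (phiBound (Real.sin t) - Real.arcsin (Real.sin t)) / (t ^ 3 * (Real.pi / 2 - t)) =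
      Nf t / t ^ 3 * ((Bc + 2 * Real.cos (t / 2)) * (Real.pi / 2 - t))⁻¹ := by
  have harc : Real.arcsin (Real.sin t) = t :=
    Real.arcsin_sin (by nlinarith [Real.pi_gt_d6]) (by nlinarith [Real.pi_gt_d6])
  have hpi2 : (1 : ℝ) < Real.pi / 2 := by nlinarith [Real.pi_gt_d6]
  have hden1 : Real.pi / 2 - t > 0 := by linarith
  have hcos := cos_half_big ht0 ht1
  have hden2 : 0 < Bc + 2 * Real.cos (t / 2) := by linarith [Bc_pos]
  have hden3 : Real.sqrt 2 * (4 - Real.pi) / (Real.pi - 2 * Real.sqrt 2) +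
      (Real.cos (t / 2) + Real.sin (t / 2)) + (Real.cos (t / 2) - Real.sin (t / 2)) =
      Bc + 2 * Real.cos (t / 2) := by unfold Bc; ring
  have hA : Real.pi * (2 - Real.sqrt 2) / (Real.pi - 2 * Real.sqrt 2) = Ac := rfl
  rw [harc]
  unfold phiBound Nf
  rw [sqrt_one_add ht0 ht1, sqrt_one_sub ht0 ht1, hden3, hA]
  have h3 : t ^ 3 ≠ 0 := by positivity
  field_simp
  ring

lemma hval : ((4 + Real.sqrt 2) * Real.pi - 12 * Real.sqrt 2) /
      ((24 - 12 * Real.sqrt 2) * Real.pi ^ 2) =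
    (3/2 - Ac/4)/6 * ((Bc + 2) * (Real.pi / 2))⁻¹ := by
  rw [← Ac_eq]
  unfold Ac
  have h1 : Real.pi - 2 * Real.sqrt 2 ≠ 0 := ne_of_gt pi_sub_pos
  have h2 : (2 : ℝ) - Real.sqrt 2 ≠ 0 := by nlinarith [sqrt2_lt]
  have h3 : Real.pi ≠ 0 := ne_of_gt Real.pi_pos
  have h4 : (24 : ℝ) - 12 * Real.sqrt 2 ≠ 0 := by nlinarith [sqrt2_lt]
  have h5 : Real.pi * (2 - Real.sqrt 2) ≠ 0 := mul_ne_zero h3 h2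
  field_simp
  have h6 : (24:ℝ) - Real.sqrt 2 * 12 ≠ 0 := by nlinarith [sqrt2_lt]
  have h7 : Real.pi * 2 * (2 - Real.sqrt 2) / (Real.pi - Real.sqrt 2 * 2) * (Real.pi - Real.sqrt 2 * 2) =
      Real.pi * 2 * (2 - Real.sqrt 2) := div_mul_cancel₀ _ (by rw [mul_comm (Real.sqrt 2)]; exact h1)
  rw [div_eq_iff h6]
  linear_combination (24 - Real.sqrt 2 * 12) * h7

lemma alpha_pos : 0 < ((4 + Real.sqrt 2) * Real.pi - 12 * Real.sqrt 2) /
      ((24 - 12 * Real.sqrt 2) * Real.pi ^ 2) := by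
  apply div_pos
  · nlinarith [Real.pi_gt_d6, sqrt2_lt, sqrt2_gt,
      mul_nonneg (by nlinarith [Real.pi_gt_d6] : (0:ℝ) ≤ Real.pi - 3.141592)
        (by nlinarith [sqrt2_gt] : (0:ℝ) ≤ Real.sqrt 2 - 1.41421)]
  · have h2 : Real.sqrt 2 < 2 := by nlinarith [sqrt2_lt]
    have hp : (0:ℝ) < Real.pi ^ 2 := by positivity
    nlinarith [hp]

theorem limit_at_zero :
    Tendsto
      (fun t : ℝ =>
        (phiBound (Real.sin t) - Real.arcsin (Real.sin t)) /
          (t ^ 3 * (Real.pi / 2 - t)))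
      (nhdsWithin 0 (Set.Ioi 0))
      (nhds (((4 + Real.sqrt 2) * Real.pi - 12 * Real.sqrt 2) /
        ((24 - 12 * Real.sqrt 2) * Real.pi ^ 2))) ∧
    0 < ((4 + Real.sqrt 2) * Real.pi - 12 * Real.sqrt 2) /
        ((24 - 12 * Real.sqrt 2) * Real.pi ^ 2) := by
  refine ⟨?_, alpha_pos⟩
  have hinv : Tendsto (fun t => ((Bc + 2 * Real.cos (t / 2)) * (Real.pi / 2 - t))⁻¹)
      (nhdsWithin 0 (Set.Ioi 0)) (nhds (((Bc + 2) * (Real.pi / 2))⁻¹)) := by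
    have hc : ContinuousAt (fun t : ℝ => (Bc + 2 * Real.cos (t / 2)) * (Real.pi / 2 - t)) 0 := by
      fun_prop
    have hne : (Bc + 2 * Real.cos ((0:ℝ) / 2)) * (Real.pi / 2 - 0) ≠ 0 := by
      simp [Real.cos_zero]
      intro h; nlinarith [Bc_pos]
    have h := (hc.inv₀ hne).tendsto.mono_left (nhdsWithin_le_nhds (s := Set.Ioi (0:ℝ)))
    simp only [Pi.inv_apply, Real.cos_zero, zero_div, mul_one, sub_zero] at h; exact h
  have hmul := tendsto_Nf_div.mul hinv
  have hIoo : Set.Ioo (0:ℝ) 1 ∈ nhdsWithin (0:ℝ) (Set.Ioi 0) :=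
    Ioo_mem_nhdsGT_of_mem ⟨le_refl 0, one_pos⟩
  have heq : (fun t => Nf t / t ^ 3 * ((Bc + 2 * Real.cos (t / 2)) * (Real.pi / 2 - t))⁻¹)
      =ᶠ[nhdsWithin (0:ℝ) (Set.Ioi 0)]
      (fun t : ℝ => (phiBound (Real.sin t) - Real.arcsin (Real.sin t)) /
        (t ^ 3 * (Real.pi / 2 - t))) :=
    Filter.eventually_of_mem hIoo (fun t ht => (eventual_eq ht.1 ht.2).symm)
  rw [hval]
  exact hmul.congr' heq
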